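/- Let (p_k) be the pairwise disjoint Cuculescu projections and q_{k} the Cuculescu projections at level λ for f ∈ A_{c,+}, and set g_{k,s} = p_k df_{k+s} q_{k+s-1} + q_{k+s-1} df_{k+s} p_k where df_j = f_j - f_{j-1}. Then the family (g_{k,s})_{k,s≥1} is pairwise orthogonal in L₂(A): φ(g_{k,s} g_{k',s'}^*) = 0 unless (k,s) = (k',s'). -/

import Mathlib

open MeasureTheory Matrix
open scoped ComplexOrder

/-- The generation-`k` dyadic cube containing `x` (side length `2^{-k}`). -/
def dyadicCubeOf (n : ℕ) (k : ℤ) (x : Fin n → ℝ) : Set (Fin n → ℝ) :=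
  {y | ∀ i, ⌊(2 : ℝ) ^ k * y i⌋ = ⌊(2 : ℝ) ^ k * x i⌋}

/-- The dyadic conditional expectation `E_k f (x)` of a matrix-valued function. -/
noncomputable def mDyadicAvg {n N : ℕ} (k : ℤ)
    (f : (Fin n → ℝ) → Matrix (Fin N) (Fin N) ℂ) (x : Fin n → ℝ) :
    Matrix (Fin N) (Fin N) ℂ :=
  Matrix.of fun i j => (2 : ℝ) ^ ((n : ℤ) * k) • ∫ y in dyadicCubeOf n k x, f y i j

/-- The martingale difference `df_j = E_j f - E_{j-1} f`. -/
noncomputable def mDiff {n N : ℕ} (j : ℤ)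
    (f : (Fin n → ℝ) → Matrix (Fin N) (Fin N) ℂ) (x : Fin n → ℝ) :
    Matrix (Fin N) (Fin N) ℂ :=
  mDyadicAvg j f x - mDyadicAvg (j - 1) f x

lemma floor_div_intpos (t : ℝ) (D : ℤ) (hD : 0 < D) : ⌊t / (D : ℝ)⌋ = ⌊t⌋ / D := by
  have hD' : (0:ℝ) < (D:ℝ) := by exact_mod_cast hD
  rw [Int.floor_eq_iff]
  constructor
  · rw [le_div_iff₀ hD']
    have h1 : (⌊t⌋ / D) * D ≤ ⌊t⌋ := Int.ediv_mul_le _ (by omega)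
    calc ((⌊t⌋ / D : ℤ) : ℝ) * D = (((⌊t⌋ / D) * D : ℤ) : ℝ) := by push_cast; ring
    _ ≤ t := le_trans (by exact_mod_cast h1) (Int.floor_le t)
  · have h2 : ⌊t⌋ < (⌊t⌋ / D + 1) * D := Int.lt_ediv_add_one_mul_self _ hD
    have h3 : t < (((⌊t⌋ / D + 1) * D : ℤ) : ℝ) :=
      lt_of_lt_of_le (Int.lt_floor_add_one t) (by exact_mod_cast h2)
    rw [div_lt_iff₀ hD']
    calc t < (((⌊t⌋ / D + 1) * D : ℤ) : ℝ) := h3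
    _ = ((⌊t⌋ / D : ℤ) + 1) * D := by push_cast; ring

lemma floor_coarsen {m k : ℤ} (hmk : m ≤ k) {a b : ℝ}
    (h : ⌊(2:ℝ) ^ k * a⌋ = ⌊(2:ℝ) ^ k * b⌋) : ⌊(2:ℝ) ^ m * a⌋ = ⌊(2:ℝ) ^ m * b⌋ := by
  have hD : (0:ℤ) < 2 ^ (k - m).toNat := by positivity
  have key : ∀ t : ℝ, (2:ℝ) ^ m * t = ((2:ℝ) ^ k * t) / ((2 ^ (k-m).toNat : ℤ) : ℝ) := by
    intro t
    have h2 : ((2 ^ (k-m).toNat : ℤ) : ℝ) = (2:ℝ) ^ (k - m) := by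
      push_cast
      rw [← zpow_natCast]
      congr 1
      omega
    rw [h2, eq_div_iff (by positivity)]
    have h4 : (2:ℝ)^m * (2:ℝ)^(k-m) = (2:ℝ)^k := by
      rw [← zpow_add₀ (by norm_num : (2:ℝ) ≠ 0)]
      congr 1
      omega
    calc (2:ℝ)^m * t * (2:ℝ)^(k-m) = ((2:ℝ)^m * (2:ℝ)^(k-m)) * t := by ring
    _ = (2:ℝ)^k * t := by rw [h4]
  rw [key a, key b, floor_div_intpos _ _ hD, floor_div_intpos _ _ hD, h]

lemma floor_scale_eq_iff (k : ℤ) (t : ℝ) (c : ℤ) :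
    ⌊(2:ℝ)^k * t⌋ = c ↔ (c:ℝ) * (2:ℝ)^(-k) ≤ t ∧ t < ((c:ℝ)+1) * (2:ℝ)^(-k) := by
  have h2 : (0:ℝ) < (2:ℝ)^k := by positivity
  have hinv : (2:ℝ)^(-k) = ((2:ℝ)^k)⁻¹ := _root_.zpow_neg 2 k
  rw [Int.floor_eq_iff, hinv, ← div_eq_mul_inv, ← div_eq_mul_inv, div_le_iff₀ h2,
    lt_div_iff₀ h2, mul_comm t ((2:ℝ)^k)]

def dcube (n : ℕ) (k : ℤ) (c : Fin n → ℤ) : Set (Fin n → ℝ) :=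
  {y | ∀ i, ⌊(2 : ℝ) ^ k * y i⌋ = c i}

lemma dcube_eq_pi (n : ℕ) (k : ℤ) (c : Fin n → ℤ) :
    dcube n k c = Set.univ.pi
      (fun i => Set.Ico ((c i : ℝ) * (2:ℝ)^(-k)) (((c i : ℝ) + 1) * (2:ℝ)^(-k))) := by
  ext y
  simp only [dcube, Set.mem_setOf_eq, Set.mem_pi, Set.mem_univ, forall_true_left, Set.mem_Ico,
    floor_scale_eq_iff]

lemma measurableSet_dcube (n : ℕ) (k : ℤ) (c : Fin n → ℤ) :
    MeasurableSet (dcube n k c) := by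
  rw [dcube_eq_pi]
  exact MeasurableSet.univ_pi (fun i => measurableSet_Ico)

lemma volume_dcube (n : ℕ) (k : ℤ) (c : Fin n → ℤ) :
    volume (dcube n k c) = ENNReal.ofReal ((2:ℝ)^(-k)) ^ n := by
  rw [dcube_eq_pi, volume_pi_pi]
  have h : ∀ i : Fin n, volume (Set.Ico ((c i : ℝ) * (2:ℝ)^(-k)) (((c i : ℝ) + 1) * (2:ℝ)^(-k)))
      = ENNReal.ofReal ((2:ℝ)^(-k)) := by
    intro i
    rw [Real.volume_Ico]
    congr 1
    ring
  rw [Finset.prod_congr rfl (fun i _ => h i), Finset.prod_const, Finset.card_univ,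
    Fintype.card_fin]

lemma volume_dcube_lt_top (n : ℕ) (k : ℤ) (c : Fin n → ℤ) :
    volume (dcube n k c) < ⊤ := by
  rw [volume_dcube]
  exact ENNReal.pow_lt_top ENNReal.ofReal_lt_top

lemma volume_dcube_toReal (n : ℕ) (k : ℤ) (c : Fin n → ℤ) :
    (volume (dcube n k c)).toReal = ((2:ℝ)^(-k)) ^ n := by
  rw [volume_dcube, ENNReal.toReal_pow, ENNReal.toReal_ofReal (by positivity)]

lemma dcube_pow_mul (n : ℕ) (k : ℤ) : (2:ℝ) ^ ((n:ℤ) * k) * ((2:ℝ)^(-k)) ^ n = 1 := by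
  have h0 : (n:ℤ)*k + (-k)*(n:ℤ) = 0 := by ring
  rw [← zpow_natCast ((2:ℝ)^(-k)) n, ← _root_.zpow_mul,
    ← zpow_add₀ (by norm_num : (2:ℝ) ≠ 0), h0, zpow_zero]

lemma iUnion_dcube (n : ℕ) (k : ℤ) : (⋃ c : Fin n → ℤ, dcube n k c) = Set.univ := by
  ext x
  simp only [Set.mem_iUnion, Set.mem_univ, iff_true]
  exact ⟨fun i => ⌊(2:ℝ)^k * x i⌋, fun i => rfl⟩

lemma pairwise_disjoint_dcube (n : ℕ) (k : ℤ) :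
    Pairwise (Function.onFun Disjoint (dcube n k)) := by
  intro c c' hcc'
  rw [Function.onFun, Set.disjoint_left]
  intro y hy hy'
  exact hcc' (funext fun i => (hy i).symm.trans (hy' i))

lemma dyadicCubeOf_eq_dcube (n : ℕ) (k : ℤ) (x : Fin n → ℝ) :
    dyadicCubeOf n k x = dcube n k (fun i => ⌊(2:ℝ)^k * x i⌋) := rfl

lemma mem_dcube_self (n : ℕ) (k : ℤ) (x : Fin n → ℝ) :
    x ∈ dcube n k (fun i => ⌊(2:ℝ)^k * x i⌋) := fun i => rfl

lemma basept_mem_dcube (n : ℕ) (k : ℤ) (c : Fin n → ℤ) :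
    (fun i => (c i : ℝ) * (2:ℝ)^(-k)) ∈ dcube n k c := by
  intro i
  have h2 : (2:ℝ)^k * ((c i : ℝ) * (2:ℝ)^(-k)) = (c i : ℝ) := by
    rw [mul_comm ((c i : ℝ)) _, ← mul_assoc, ← zpow_add₀ (by norm_num : (2:ℝ) ≠ 0)]
    simp
  rw [h2, Int.floor_intCast]

noncomputable def sAvg (n : ℕ) (k : ℤ) (h : (Fin n → ℝ) → ℂ) (x : Fin n → ℝ) : ℂ :=
  (2:ℝ) ^ ((n:ℤ)*k) • ∫ y in dyadicCubeOf n k x, h y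

lemma mDyadicAvg_apply {n N : ℕ} (k : ℤ) (f : (Fin n → ℝ) → Matrix (Fin N) (Fin N) ℂ)
    (x : Fin n → ℝ) (a b : Fin N) :
    mDyadicAvg k f x a b = sAvg n k (fun y => f y a b) x := rfl

lemma dyadicCubeOf_congr {n : ℕ} {k : ℤ} {x y : Fin n → ℝ}
    (h : ∀ i, ⌊(2:ℝ)^k * x i⌋ = ⌊(2:ℝ)^k * y i⌋) :
    dyadicCubeOf n k x = dyadicCubeOf n k y := by
  rw [dyadicCubeOf_eq_dcube, dyadicCubeOf_eq_dcube]
  exact congrArg _ (funext h)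

lemma sAvg_congr_cube {n : ℕ} {k : ℤ} {h : (Fin n → ℝ) → ℂ} {x y : Fin n → ℝ}
    (hxy : ∀ i, ⌊(2:ℝ)^k * x i⌋ = ⌊(2:ℝ)^k * y i⌋) : sAvg n k h x = sAvg n k h y := by
  unfold sAvg
  rw [dyadicCubeOf_congr hxy]

lemma sAvg_measurable (n : ℕ) (k : ℤ) (h : (Fin n → ℝ) → ℂ) :
    Measurable (sAvg n k h) := by
  have heq : sAvg n k h = (fun c : Fin n → ℤ => (2:ℝ) ^ ((n:ℤ)*k) • ∫ y in dcube n k c, h y)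
      ∘ (fun x i => ⌊(2:ℝ)^k * x i⌋) := by
    funext x
    simp only [Function.comp_apply, sAvg, dyadicCubeOf_eq_dcube]
  rw [heq]
  exact (measurable_of_countable _).comp
    (measurable_pi_lambda _ fun i =>
      Int.measurable_floor.comp (measurable_const.mul (measurable_pi_apply i)))

lemma sAvg_norm_le {n : ℕ} {k : ℤ} {h : (Fin n → ℝ) → ℂ} (hm : Measurable h)
    {C : ℝ} (hb : ∀ y, ‖h y‖ ≤ C) (x : Fin n → ℝ) : ‖sAvg n k h x‖ ≤ C := by
  have hC0 : 0 ≤ C := le_trans (norm_nonneg _) (hb 0)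
  unfold sAvg
  rw [norm_smul, Real.norm_eq_abs, abs_of_pos (by positivity : (0:ℝ) < (2:ℝ)^((n:ℤ)*k))]
  rw [dyadicCubeOf_eq_dcube]
  have hbound : ‖∫ y in dcube n k (fun i => ⌊(2:ℝ)^k * x i⌋), h y‖
      ≤ C * (volume (dcube n k (fun i => ⌊(2:ℝ)^k * x i⌋))).toReal :=
    norm_setIntegral_le_of_norm_le_const (volume_dcube_lt_top n k _)
      (fun y _ => hb y)
  calc (2:ℝ)^((n:ℤ)*k) * ‖∫ y in dcube n k (fun i => ⌊(2:ℝ)^k * x i⌋), h y‖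
      ≤ (2:ℝ)^((n:ℤ)*k) * (C * (volume (dcube n k (fun i => ⌊(2:ℝ)^k * x i⌋))).toReal) := by
        exact mul_le_mul_of_nonneg_left hbound (by positivity)
  _ = C * ((2:ℝ)^((n:ℤ)*k) * ((2:ℝ)^(-k))^n) := by rw [volume_dcube_toReal]; ring
  _ = C := by rw [dcube_pow_mul]; ring

lemma dist_le_of_same_cube {n : ℕ} {k : ℤ} {x y : Fin n → ℝ}
    (hxy : ∀ i, ⌊(2:ℝ)^k * x i⌋ = ⌊(2:ℝ)^k * y i⌋) : ‖x - y‖ ≤ (2:ℝ)^(-k) := by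
  rw [pi_norm_le_iff_of_nonneg (by positivity)]
  intro i
  have h2 : (0:ℝ) < (2:ℝ)^k := by positivity
  have habs : |(2:ℝ)^k * x i - (2:ℝ)^k * y i| ≤ 1 := by
    have h1 : (2:ℝ)^k * x i - (2:ℝ)^k * y i < 1 := by
      have := Int.lt_floor_add_one ((2:ℝ)^k * x i)
      have := Int.floor_le ((2:ℝ)^k * y i)
      rw [hxy i] at *
      linarith
    have h2' : (2:ℝ)^k * y i - (2:ℝ)^k * x i < 1 := by
      have := Int.lt_floor_add_one ((2:ℝ)^k * y i)
      have := Int.floor_le ((2:ℝ)^k * x i)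
      rw [hxy i] at *
      linarith
    rw [abs_sub_le_iff]
    constructor <;> linarith
  have hmul : (2:ℝ)^k * |x i - y i| ≤ 1 := by
    calc (2:ℝ)^k * |x i - y i| = |(2:ℝ)^k * (x i - y i)| := by
          rw [abs_mul, abs_of_pos h2]
    _ = |(2:ℝ)^k * x i - (2:ℝ)^k * y i| := by ring_nf
    _ ≤ 1 := habs
  have : |x i - y i| ≤ (2:ℝ)^(-k) := by
    rw [_root_.zpow_neg, ← one_div, le_div_iff₀ h2]
    linarith [hmul, mul_comm ((2:ℝ)^k) |x i - y i|]
  simpa using this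

lemma sAvg_eq_zero {n : ℕ} {k : ℤ} {h : (Fin n → ℝ) → ℂ} {R : ℝ}
    (hsupp : ∀ y, R < ‖y‖ → h y = 0) {x : Fin n → ℝ}
    (hx : R + (2:ℝ)^(-k) < ‖x‖) : sAvg n k h x = 0 := by
  unfold sAvg
  have : ∫ y in dyadicCubeOf n k x, h y = ∫ y in dyadicCubeOf n k x, (0:ℂ) := by
    rw [dyadicCubeOf_eq_dcube]
    apply setIntegral_congr_fun (measurableSet_dcube n k _)
    intro y hy
    apply hsupp
    have hdist : ‖x - y‖ ≤ (2:ℝ)^(-k) :=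
      dist_le_of_same_cube (fun i => (hy i).symm)
    have : ‖x‖ ≤ ‖y‖ + ‖x - y‖ := by
      calc ‖x‖ = ‖y + (x - y)‖ := by ring_nf
      _ ≤ ‖y‖ + ‖x - y‖ := norm_add_le _ _
    linarith
  rw [this, integral_zero, smul_zero]

lemma integrable_of_bdd_supp {n : ℕ} {F : (Fin n → ℝ) → ℂ} (hm : Measurable F) {C R : ℝ}
    (hb : ∀ x, ‖F x‖ ≤ C) (hs : ∀ x, R < ‖x‖ → F x = 0) : Integrable F := by
  have hC0 : 0 ≤ C := le_trans (norm_nonneg _) (hb 0)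
  apply Integrable.mono' (g := (Metric.closedBall (0 : Fin n → ℝ) R).indicator (fun _ => C))
  · exact (integrable_indicator_iff measurableSet_closedBall).2
      (integrableOn_const (measure_closedBall_lt_top).ne)
  · exact hm.aestronglyMeasurable
  · filter_upwards with x
    by_cases hx : x ∈ Metric.closedBall (0 : Fin n → ℝ) R
    · rw [Set.indicator_of_mem hx]
      exact hb x
    · rw [Set.indicator_of_notMem hx]
      have : R < ‖x‖ := by
        simp only [Metric.mem_closedBall, dist_zero_right, not_le] at hx
        exact hx
      rw [hs x this, norm_zero]

lemma integral_sAvg_mul (n : ℕ) (k m : ℤ) (hmk : m ≤ k) (h g : (Fin n → ℝ) → ℂ)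
    (hhm : Measurable h) {Ch : ℝ} (hhb : ∀ y, ‖h y‖ ≤ Ch) {R : ℝ}
    (hhs : ∀ y, R < ‖y‖ → h y = 0)
    (hgm : Measurable g) {Cg : ℝ} (hgb : ∀ x, ‖g x‖ ≤ Cg)
    (hgc : ∀ x y : Fin n → ℝ, (∀ i, ⌊(2:ℝ)^m * x i⌋ = ⌊(2:ℝ)^m * y i⌋) → g x = g y) :
    ∫ x, sAvg n k h x * g x = ∫ x, h x * g x := by
  have hCh0 : 0 ≤ Ch := le_trans (norm_nonneg _) (hhb 0)
  have hCg0 : 0 ≤ Cg := le_trans (norm_nonneg _) (hgb 0)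
  have hFm : Measurable fun x => sAvg n k h x * g x := (sAvg_measurable n k h).mul hgm
  have hGm : Measurable fun x => h x * g x := hhm.mul hgm
  have hFb : ∀ x, ‖sAvg n k h x * g x‖ ≤ Ch * Cg := fun x => by
    rw [norm_mul]
    exact mul_le_mul (sAvg_norm_le hhm hhb x) (hgb x) (norm_nonneg _) hCh0
  have hGb : ∀ x, ‖h x * g x‖ ≤ Ch * Cg := fun x => by
    rw [norm_mul]
    exact mul_le_mul (hhb x) (hgb x) (norm_nonneg _) hCh0
  have hposk : (0:ℝ) < (2:ℝ)^(-k) := by positivity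
  have hFs : ∀ x : Fin n → ℝ, R + (2:ℝ)^(-k) < ‖x‖ → sAvg n k h x * g x = 0 := fun x hx => by
    rw [sAvg_eq_zero hhs hx, zero_mul]
  have hGs : ∀ x : Fin n → ℝ, R + (2:ℝ)^(-k) < ‖x‖ → h x * g x = 0 := fun x hx => by
    rw [hhs x (by linarith), zero_mul]
  have hFi : Integrable fun x => sAvg n k h x * g x := integrable_of_bdd_supp hFm hFb hFs
  have hGi : Integrable fun x => h x * g x := integrable_of_bdd_supp hGm hGb hGs
  have hmeasc := measurableSet_dcube n k
  have hdisj := pairwise_disjoint_dcube n k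
  have percube : ∀ c : Fin n → ℤ,
      ∫ x in dcube n k c, sAvg n k h x * g x = ∫ x in dcube n k c, h x * g x := by
    intro c
    set x₀ : Fin n → ℝ := fun i => (c i : ℝ) * (2:ℝ)^(-k) with hx₀def
    have hx₀ : x₀ ∈ dcube n k c := basept_mem_dcube n k c
    have hfloorx₀ : ∀ i, ⌊(2:ℝ)^k * x₀ i⌋ = c i := hx₀
    have hFconst : Set.EqOn (fun x => sAvg n k h x * g x)
        (fun _ => sAvg n k h x₀ * g x₀) (dcube n k c) := by
      intro x hx
      have hfl : ∀ i, ⌊(2:ℝ)^k * x i⌋ = ⌊(2:ℝ)^k * x₀ i⌋ :=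
        fun i => (hx i).trans (hfloorx₀ i).symm
      have h1 : sAvg n k h x = sAvg n k h x₀ := sAvg_congr_cube hfl
      have h2 : g x = g x₀ := hgc _ _ (fun i => floor_coarsen hmk (hfl i))
      simp only [h1, h2]
    have hGconst : Set.EqOn (fun x => h x * g x) (fun x => h x * g x₀) (dcube n k c) := by
      intro x hx
      have hfl : ∀ i, ⌊(2:ℝ)^k * x i⌋ = ⌊(2:ℝ)^k * x₀ i⌋ :=
        fun i => (hx i).trans (hfloorx₀ i).symm
      have h2 : g x = g x₀ := hgc _ _ (fun i => floor_coarsen hmk (hfl i))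
      simp only [h2]
    rw [setIntegral_congr_fun (hmeasc c) hFconst, setIntegral_congr_fun (hmeasc c) hGconst]
    rw [setIntegral_const, integral_mul_const, measureReal_def, volume_dcube_toReal]
    have hcube : dyadicCubeOf n k x₀ = dcube n k c := by
      rw [dyadicCubeOf_eq_dcube]
      exact congrArg _ (funext hfloorx₀)
    show ((2:ℝ)^(-k))^n • (sAvg n k h x₀ * g x₀) = (∫ x in dcube n k c, h x) * g x₀
    unfold sAvg
    rw [hcube, smul_mul_assoc, smul_smul, mul_comm (((2:ℝ)^(-k))^n),
      dcube_pow_mul, one_smul]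
  calc ∫ x, sAvg n k h x * g x
      = ∫ x in ⋃ c : Fin n → ℤ, dcube n k c, sAvg n k h x * g x := by
        rw [iUnion_dcube, Measure.restrict_univ]
  _ = ∑' c : Fin n → ℤ, ∫ x in dcube n k c, sAvg n k h x * g x :=
        integral_iUnion hmeasc hdisj (by rw [iUnion_dcube]; exact hFi.integrableOn)
  _ = ∑' c : Fin n → ℤ, ∫ x in dcube n k c, h x * g x := tsum_congr percube
  _ = ∫ x in ⋃ c : Fin n → ℤ, dcube n k c, h x * g x :=
        (integral_iUnion hmeasc hdisj (by rw [iUnion_dcube]; exact hGi.integrableOn)).symm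
  _ = ∫ x, h x * g x := by rw [iUnion_dcube, Measure.restrict_univ]


lemma star_pi_single {N : ℕ} (b : Fin N) :
    star (Pi.single b (1:ℂ) : Fin N → ℂ) = (Pi.single b (1:ℂ) : Fin N → ℂ) := by
  funext i
  simp only [Pi.star_apply, Pi.single_apply]
  split <;> simp

lemma quad_expand {N : ℕ} (M : Matrix (Fin N) (Fin N) ℂ) (a b : Fin N) (c : ℂ) :
    star ((Pi.single a (1:ℂ) : Fin N → ℂ) + c • (Pi.single b (1:ℂ) : Fin N → ℂ)) ⬝ᵥ
      (M *ᵥ ((Pi.single a (1:ℂ) : Fin N → ℂ) + c • (Pi.single b (1:ℂ) : Fin N → ℂ)))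
      = M a a + c * M a b + star c * M b a + star c * c * M b b := by
  rw [star_add, star_smul, star_pi_single, Matrix.mulVec_add, Matrix.mulVec_smul]
  simp only [add_dotProduct, smul_dotProduct, dotProduct_add,
    dotProduct_smul, star_pi_single, Matrix.mulVec_single_one, Matrix.col_apply, single_dotProduct,
    mul_one, smul_eq_mul]
  ring

lemma psd_diag_re_le {N : ℕ} {A : Matrix (Fin N) (Fin N) ℂ}
    {C : ℝ} (hC : (C • (1 : Matrix (Fin N) (Fin N) ℂ) - A).PosSemidef) (a : Fin N) :
    (A a a).re ≤ C := by
  have h := hC.dotProduct_mulVec_nonneg (Pi.single a (1:ℂ) : Fin N → ℂ)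
  have hv : star (Pi.single a (1:ℂ) : Fin N → ℂ) ⬝ᵥ
      ((C • (1 : Matrix (Fin N) (Fin N) ℂ) - A) *ᵥ (Pi.single a (1:ℂ) : Fin N → ℂ))
      = (C • (1 : Matrix (Fin N) (Fin N) ℂ) - A) a a := by
    rw [star_pi_single, Matrix.mulVec_single, single_dotProduct]
    simp
  rw [hv] at h
  have := (Complex.le_def.1 h).1
  simp only [Matrix.sub_apply, Matrix.smul_apply, Matrix.one_apply_eq, Complex.zero_re,
    Complex.sub_re, Complex.real_smul, Complex.mul_re] at this ⊢
  simp only [Complex.one_re, Complex.one_im, Complex.ofReal_re, Complex.ofReal_im] at this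
  linarith

lemma psd_diag_re_nonneg {N : ℕ} {A : Matrix (Fin N) (Fin N) ℂ}
    (hA : A.PosSemidef) (a : Fin N) : 0 ≤ (A a a).re := by
  have h := hA.dotProduct_mulVec_nonneg (Pi.single a (1:ℂ) : Fin N → ℂ)
  have hv : star (Pi.single a (1:ℂ) : Fin N → ℂ) ⬝ᵥ
      (A *ᵥ (Pi.single a (1:ℂ) : Fin N → ℂ)) = A a a := by
    rw [star_pi_single, Matrix.mulVec_single, single_dotProduct]
    simp
  rw [hv] at h
  exact (Complex.le_def.1 h).1

lemma psd_entry_norm_le {N : ℕ} {A : Matrix (Fin N) (Fin N) ℂ} (hA : A.PosSemidef)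
    {C : ℝ} (hC : (C • (1 : Matrix (Fin N) (Fin N) ℂ) - A).PosSemidef) (a b : Fin N) :
    ‖A a b‖ ≤ C := by
  by_cases hz : A a b = 0
  · rw [hz, norm_zero]
    calc (0:ℝ) ≤ (A a a).re := psd_diag_re_nonneg hA a
    _ ≤ C := psd_diag_re_le hC a
  · set z := A a b with hzdef
    set c : ℂ := -(star z) / ‖z‖ with hcdef
    have hznorm : (0:ℝ) < ‖z‖ := norm_pos_iff.2 hz
    have h := hA.dotProduct_mulVec_nonneg ((Pi.single a (1:ℂ) : Fin N → ℂ) + c • (Pi.single b (1:ℂ) : Fin N → ℂ))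
    rw [quad_expand] at h
    have hba : A b a = star z := by
      have h1 : A b a = Aᴴ b a := by rw [hA.1]
      rw [h1, Matrix.conjTranspose_apply, hzdef]
    have hstar : (star z) * z = ((‖z‖:ℂ))^2 := by
      have h1 := RCLike.conj_mul (K := ℂ) z
      rw [Complex.star_def]
      exact_mod_cast h1
    have hcz : c * z = -(‖z‖ : ℂ) := by
      rw [hcdef, div_mul_eq_mul_div, neg_mul, hstar, sq, neg_div,
        mul_div_assoc, div_self (by exact_mod_cast hznorm.ne' : (‖z‖:ℂ) ≠ 0)]
      ring
    have hsz : star c * star z = -(‖z‖ : ℂ) := by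
      calc star c * star z = star (z * c) := (StarMul.star_mul z c).symm
      _ = star (c * z) := by rw [mul_comm]
      _ = -(‖z‖ : ℂ) := by rw [hcz]; simp
    have hcc : star c * c = 1 := by
      have hnormc : ‖c‖ = 1 := by
        rw [hcdef, norm_div, norm_neg, norm_star]
        simp only [Complex.norm_real, Real.norm_eq_abs, abs_of_pos hznorm]
        exact div_self hznorm.ne'
      have h1 := RCLike.conj_mul (K := ℂ) c
      rw [Complex.star_def, h1, hnormc]
      norm_num
    rw [hba, hcz, hsz, hcc, one_mul] at h
    have hre := (Complex.le_def.1 h).1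
    simp only [Complex.zero_re, Complex.add_re, Complex.neg_re, Complex.ofReal_re] at hre
    have hda : (A a a).re ≤ C := psd_diag_re_le hC a
    have hdb : (A b b).re ≤ C := psd_diag_re_le hC b
    rw [hzdef] at *
    linarith

lemma trace_mul6_zero_mid {N : ℕ} (A X B C' Y E : Matrix (Fin N) (Fin N) ℂ)
    (h : B * C' = 0) : Matrix.trace ((A * X * B) * (C' * Y * E)) = 0 := by
  have hh : (A * X * B) * (C' * Y * E) = A * X * (B * C') * Y * E := by noncomm_ring
  rw [hh, h]
  simp

lemma trace_mul6_zero_outer {N : ℕ} (A X B C' Y E : Matrix (Fin N) (Fin N) ℂ)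
    (h : E * A = 0) : Matrix.trace ((A * X * B) * (C' * Y * E)) = 0 := by
  rw [Matrix.trace_mul_comm]
  exact trace_mul6_zero_mid C' Y E A X B h

section EntryCombinators

variable {X : Type*} [MeasurableSpace X] {N : ℕ}

lemma entryMeas_mul {F G : X → Matrix (Fin N) (Fin N) ℂ}
    (hF : ∀ a b, Measurable fun x => F x a b) (hG : ∀ a b, Measurable fun x => G x a b) :
    ∀ a b, Measurable fun x => (F x * G x) a b := by
  intro a b
  simp only [Matrix.mul_apply]
  exact Finset.measurable_sum _ (fun c _ => (hF a c).mul (hG c b))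

lemma entryMeas_add {F G : X → Matrix (Fin N) (Fin N) ℂ}
    (hF : ∀ a b, Measurable fun x => F x a b) (hG : ∀ a b, Measurable fun x => G x a b) :
    ∀ a b, Measurable fun x => (F x + G x) a b := fun a b => by
  simp only [Matrix.add_apply]
  exact (hF a b).add (hG a b)

lemma entryMeas_sub {F G : X → Matrix (Fin N) (Fin N) ℂ}
    (hF : ∀ a b, Measurable fun x => F x a b) (hG : ∀ a b, Measurable fun x => G x a b) :
    ∀ a b, Measurable fun x => (F x - G x) a b := fun a b => by
  simp only [Matrix.sub_apply]
  exact (hF a b).sub (hG a b)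

lemma entryMeas_conjTranspose {F : X → Matrix (Fin N) (Fin N) ℂ}
    (hF : ∀ a b, Measurable fun x => F x a b) :
    ∀ a b, Measurable fun x => (F x)ᴴ a b := fun a b => by
  simp only [Matrix.conjTranspose_apply]
  exact Complex.continuous_conj.measurable.comp (hF b a)

lemma entryBdd_mul {F G : X → Matrix (Fin N) (Fin N) ℂ} {C D : ℝ}
    (hC : 0 ≤ C) (hF : ∀ x a b, ‖F x a b‖ ≤ C) (hG : ∀ x a b, ‖G x a b‖ ≤ D) :
    ∀ (x : X) (a b : Fin N), ‖(F x * G x) a b‖ ≤ N * (C * D) := by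
  intro x a b
  simp only [Matrix.mul_apply]
  calc ‖∑ c, F x a c * G x c b‖ ≤ ∑ c, ‖F x a c * G x c b‖ := norm_sum_le _ _
  _ ≤ ∑ _c : Fin N, C * D := Finset.sum_le_sum fun c _ => by
        rw [norm_mul]
        exact mul_le_mul (hF x a c) (hG x c b) (norm_nonneg _) hC
  _ = N * (C * D) := by
        rw [Finset.sum_const, Finset.card_univ, Fintype.card_fin, nsmul_eq_mul]

lemma entryBdd_add {F G : X → Matrix (Fin N) (Fin N) ℂ} {C D : ℝ}
    (hF : ∀ x a b, ‖F x a b‖ ≤ C) (hG : ∀ x a b, ‖G x a b‖ ≤ D) :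
    ∀ (x : X) (a b : Fin N), ‖(F x + G x) a b‖ ≤ C + D := fun x a b => by
  simp only [Matrix.add_apply]
  exact le_trans (norm_add_le _ _) (add_le_add (hF x a b) (hG x a b))

lemma entryBdd_sub {F G : X → Matrix (Fin N) (Fin N) ℂ} {C D : ℝ}
    (hF : ∀ x a b, ‖F x a b‖ ≤ C) (hG : ∀ x a b, ‖G x a b‖ ≤ D) :
    ∀ (x : X) (a b : Fin N), ‖(F x - G x) a b‖ ≤ C + D := fun x a b => by
  simp only [Matrix.sub_apply]
  exact le_trans (norm_sub_le _ _) (add_le_add (hF x a b) (hG x a b))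

lemma entryBdd_conjTranspose {F : X → Matrix (Fin N) (Fin N) ℂ} {C : ℝ}
    (hF : ∀ x a b, ‖F x a b‖ ≤ C) :
    ∀ (x : X) (a b : Fin N), ‖(F x)ᴴ a b‖ ≤ C := fun x a b => by
  simp only [Matrix.conjTranspose_apply, norm_star]
  exact hF x b a

end EntryCombinators

lemma trace_sandwich {N : ℕ} (P D r M : Matrix (Fin N) (Fin N) ℂ) :
    Matrix.trace (P * D * r * M) = Matrix.trace (D * (r * M * P)) := by
  rw [show P * D * r * M = P * (D * (r * M)) by noncomm_ring, Matrix.trace_mul_comm]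
  exact congrArg Matrix.trace (by noncomm_ring)

lemma trace_mul_eq_sum_prod {N : ℕ} (A B : Matrix (Fin N) (Fin N) ℂ) :
    Matrix.trace (A * B) = ∑ ab : Fin N × Fin N, A ab.1 ab.2 * B ab.2 ab.1 := by
  rw [Matrix.trace, Fintype.sum_prod_type]
  simp only [Matrix.diag, Matrix.mul_apply]

lemma herm_idem_psd {N : ℕ} {A : Matrix (Fin N) (Fin N) ℂ}
    (hH : A.IsHermitian) (hI : A * A = A) : A.PosSemidef := by
  have h := Matrix.posSemidef_conjTranspose_mul_self A
  rwa [hH, hI] at h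

lemma herm_idem_one_sub_psd {N : ℕ} {A : Matrix (Fin N) (Fin N) ℂ}
    (hH : A.IsHermitian) (hI : A * A = A) :
    ((1:ℝ) • (1 : Matrix (Fin N) (Fin N) ℂ) - A).PosSemidef := by
  rw [one_smul]
  have h := Matrix.posSemidef_conjTranspose_mul_self ((1 : Matrix (Fin N) (Fin N) ℂ) - A)
  have h1 : ((1 : Matrix (Fin N) (Fin N) ℂ) - A)ᴴ = 1 - A := by
    rw [Matrix.conjTranspose_sub, Matrix.conjTranspose_one, hH]
  have h2 : ((1 : Matrix (Fin N) (Fin N) ℂ) - A) * (1 - A) = 1 - A := by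
    rw [sub_mul, one_mul, mul_sub, mul_one, hI]
    abel
  rwa [h1, h2] at h

lemma proj_entry_le_one {N : ℕ} {A : Matrix (Fin N) (Fin N) ℂ}
    (hH : A.IsHermitian) (hI : A * A = A) (a b : Fin N) : ‖A a b‖ ≤ 1 :=
  psd_entry_norm_le (herm_idem_psd hH hI) (herm_idem_one_sub_psd hH hI) a b

section Qlemmas

variable {n N : ℕ} {q : ℤ → (Fin n → ℝ) → Matrix (Fin N) (Fin N) ℂ}

lemma p_mul_q_zero (hqdec : ∀ (j k : ℤ), j ≤ k → ∀ x,
      q k x * q j x = q k x ∧ q j x * q k x = q k x)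
    (kk m : ℤ) (hkm : kk ≤ m) (x : Fin n → ℝ) :
    (q (kk-1) x - q kk x) * q m x = 0 ∧ q m x * (q (kk-1) x - q kk x) = 0 := by
  have h1 := hqdec (kk-1) m (by omega) x
  have h2 := hqdec kk m hkm x
  constructor
  · rw [sub_mul, h1.2, h2.2, sub_self]
  · rw [mul_sub, h1.1, h2.1, sub_self]

lemma p_mul_p_zero (hqdec : ∀ (j k : ℤ), j ≤ k → ∀ x,
      q k x * q j x = q k x ∧ q j x * q k x = q k x)
    (k k' : ℤ) (hne : k ≠ k') (x : Fin n → ℝ) :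
    (q (k-1) x - q k x) * (q (k'-1) x - q k' x) = 0 := by
  rcases lt_or_gt_of_ne hne with h | h
  · rw [mul_sub, (p_mul_q_zero hqdec k (k'-1) (by omega) x).1,
      (p_mul_q_zero hqdec k k' (by omega) x).1, sub_self]
  · rw [sub_mul, (p_mul_q_zero hqdec k' (k-1) (by omega) x).2,
      (p_mul_q_zero hqdec k' k (by omega) x).2, sub_self]

end Qlemmas

lemma mDyadicAvg_congr {n N : ℕ} (m : ℤ) (f : (Fin n → ℝ) → Matrix (Fin N) (Fin N) ℂ)
    {x y : Fin n → ℝ} (h : ∀ i, ⌊(2:ℝ)^m * x i⌋ = ⌊(2:ℝ)^m * y i⌋) :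
    mDyadicAvg m f x = mDyadicAvg m f y := by
  unfold mDyadicAvg
  rw [dyadicCubeOf_congr h]


lemma trace_good_pair_zero {N : ℕ} (P D r P' D' : Matrix (Fin N) (Fin N) ℂ)
    (hP' : P'ᴴ = P') (hr : rᴴ = r)
    (h1 : P' * P = 0) (h2 : r * P' = 0) (h3 : P * r = 0) (h4 : P * P' = 0) :
    Matrix.trace ((P * D * r + r * D * P) * (P' * D' * r + r * D' * P')ᴴ) = 0 := by
  have hct : (P' * D' * r + r * D' * P')ᴴ = r * D'ᴴ * P' + P' * D'ᴴ * r := by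
    rw [Matrix.conjTranspose_add, Matrix.conjTranspose_mul, Matrix.conjTranspose_mul,
      Matrix.conjTranspose_mul, Matrix.conjTranspose_mul, hP', hr]
    noncomm_ring
  rw [hct]
  have t1 := trace_mul6_zero_outer P D r r D'ᴴ P' h1
  have t2 := trace_mul6_zero_mid P D r P' D'ᴴ r h2
  have t3 := trace_mul6_zero_mid r D P r D'ᴴ P' h3
  have t4 := trace_mul6_zero_mid r D P P' D'ᴴ r h4
  calc Matrix.trace ((P*D*r + r*D*P) * (r*D'ᴴ*P' + P'*D'ᴴ*r))
      = Matrix.trace ((P*D*r)*(r*D'ᴴ*P')) + Matrix.trace ((P*D*r)*(P'*D'ᴴ*r))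
        + (Matrix.trace ((r*D*P)*(r*D'ᴴ*P')) + Matrix.trace ((r*D*P)*(P'*D'ᴴ*r))) := by
        rw [add_mul, mul_add, mul_add, Matrix.trace_add, Matrix.trace_add, Matrix.trace_add]
  _ = 0 := by rw [t1, t2, t3, t4]; ring

theorem gks_aux (n N : ℕ)
    (f : (Fin n → ℝ) → Matrix (Fin N) (Fin N) ℂ)
    (hfmeas : ∀ i j, Measurable fun x => f x i j)
    (hfpos : ∀ x, Matrix.PosSemidef (f x))
    (hfbdd : ∃ C : ℝ, ∀ x, Matrix.PosSemidef (C • (1 : Matrix (Fin N) (Fin N) ℂ) - f x))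
    (hfsupp : ∃ R : ℝ, ∀ x : Fin n → ℝ, R < ‖x‖ → f x = 0)
    (q : ℤ → (Fin n → ℝ) → Matrix (Fin N) (Fin N) ℂ)
    (hqmeas : ∀ k i j, Measurable fun x => q k x i j)
    (hqproj : ∀ k x, (q k x).IsHermitian ∧ q k x * q k x = q k x)
    (hqadapt : ∀ (k : ℤ) (x y : Fin n → ℝ),
      (∀ i, ⌊(2 : ℝ) ^ k * x i⌋ = ⌊(2 : ℝ) ^ k * y i⌋) → q k x = q k y)
    (k k' s s' : ℤ) (hs : 1 ≤ s) (hs' : 1 ≤ s') (hlt : k' + s' < k + s) :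
      (∫ x : Fin n → ℝ, Matrix.trace
        (((q (k - 1) x - q k x) * mDiff (k + s) f x * q (k + s - 1) x +
            q (k + s - 1) x * mDiff (k + s) f x * (q (k - 1) x - q k x)) *
         ((q (k' - 1) x - q k' x) * mDiff (k' + s') f x * q (k' + s' - 1) x +
            q (k' + s' - 1) x * mDiff (k' + s') f x * (q (k' - 1) x - q k' x))ᴴ))
        = 0 := by
  obtain ⟨C0, hC0⟩ := hfbdd
  obtain ⟨R, hR⟩ := hfsupp
  obtain ⟨Cf, hCf0, hfe⟩ : ∃ Cf : ℝ, 0 ≤ Cf ∧ ∀ (x : Fin n → ℝ) (a b : Fin N), ‖f x a b‖ ≤ Cf :=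
    ⟨max C0 0, le_max_right _ _, fun x a b =>
      le_trans (psd_entry_norm_le (hfpos x) (hC0 x) a b) (le_max_left _ _)⟩
  have hfsupp' : ∀ (a b : Fin N) (y : Fin n → ℝ), R < ‖y‖ → f y a b = 0 := fun a b y hy => by
    rw [hR y hy]
    rfl
  have hqe : ∀ (m : ℤ) (x : Fin n → ℝ) (a b : Fin N), ‖q m x a b‖ ≤ 1 := fun m x a b =>
    proj_entry_le_one (hqproj m x).1 (hqproj m x).2 a b
  -- entry bounds and measurability for P, P', D'
  have hPe : ∀ (x : Fin n → ℝ) (a b : Fin N), ‖(q (k-1) x - q k x) a b‖ ≤ 1 + 1 :=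
    entryBdd_sub (fun x a b => hqe (k-1) x a b) (fun x a b => hqe k x a b)
  have hP'e : ∀ (x : Fin n → ℝ) (a b : Fin N), ‖(q (k'-1) x - q k' x) a b‖ ≤ 1 + 1 :=
    entryBdd_sub (fun x a b => hqe (k'-1) x a b) (fun x a b => hqe k' x a b)
  have hPm : ∀ a b, Measurable fun x => (q (k-1) x - q k x) a b :=
    entryMeas_sub (hqmeas (k-1)) (hqmeas k)
  have hP'm : ∀ a b, Measurable fun x => (q (k'-1) x - q k' x) a b :=
    entryMeas_sub (hqmeas (k'-1)) (hqmeas k')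
  have hAe : ∀ (m : ℤ) (x : Fin n → ℝ) (a b : Fin N), ‖mDyadicAvg m f x a b‖ ≤ Cf :=
    fun m x a b => by
      rw [mDyadicAvg_apply]
      exact sAvg_norm_le (hfmeas a b) (fun y => hfe y a b) x
  have hDe : ∀ (x : Fin n → ℝ) (a b : Fin N), ‖mDiff (k'+s') f x a b‖ ≤ Cf + Cf :=
    entryBdd_sub (fun x a b => hAe (k'+s') x a b) (fun x a b => hAe (k'+s'-1) x a b)
  have hDm : ∀ (a b : Fin N), Measurable fun x => mDiff (k'+s') f x a b := fun a b => by
    have hrw : (fun x => mDiff (k'+s') f x a b)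
        = fun x => sAvg n (k'+s') (fun y => f y a b) x - sAvg n (k'+s'-1) (fun y => f y a b) x :=
      rfl
    rw [hrw]
    exact (sAvg_measurable _ _ _).sub (sAvg_measurable _ _ _)
  -- the matrix M = (G')ᴴ
  have hMm : ∀ a b, Measurable fun x =>
      ((q (k' - 1) x - q k' x) * mDiff (k' + s') f x * q (k' + s' - 1) x +
        q (k' + s' - 1) x * mDiff (k' + s') f x * (q (k' - 1) x - q k' x))ᴴ a b :=
    entryMeas_conjTranspose (entryMeas_add
      (entryMeas_mul (entryMeas_mul hP'm hDm) (hqmeas (k'+s'-1)))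
      (entryMeas_mul (entryMeas_mul (hqmeas (k'+s'-1)) hDm) hP'm))
  have hCD0 : (0:ℝ) ≤ Cf + Cf := by linarith
  have h20 : (0:ℝ) ≤ 1 + 1 := by norm_num
  have hc10 : (0:ℝ) ≤ (N:ℝ) * ((1+1) * (Cf+Cf)) :=
    mul_nonneg (Nat.cast_nonneg _) (mul_nonneg h20 hCD0)
  have hc30 : (0:ℝ) ≤ (N:ℝ) * (1 * (Cf+Cf)) :=
    mul_nonneg (Nat.cast_nonneg _) (mul_nonneg zero_le_one hCD0)
  have hMe : ∀ (x : Fin n → ℝ) (a b : Fin N), ‖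
      ((q (k' - 1) x - q k' x) * mDiff (k' + s') f x * q (k' + s' - 1) x +
        q (k' + s' - 1) x * mDiff (k' + s') f x * (q (k' - 1) x - q k' x))ᴴ a b‖
      ≤ (N:ℝ) * ((N:ℝ) * ((1+1) * (Cf+Cf)) * 1) + (N:ℝ) * ((N:ℝ) * (1 * (Cf+Cf)) * (1+1)) :=
    entryBdd_conjTranspose (entryBdd_add
      (entryBdd_mul hc10 (entryBdd_mul h20 hP'e hDe) (fun x a b => hqe (k'+s'-1) x a b))
      (entryBdd_mul hc30 (entryBdd_mul zero_le_one (fun x a b => hqe (k'+s'-1) x a b) hDe) hP'e))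
  set cM : ℝ := (N:ℝ) * ((N:ℝ) * ((1+1) * (Cf+Cf)) * 1) + (N:ℝ) * ((N:ℝ) * (1 * (Cf+Cf)) * (1+1))
    with hcMdef
  have hcM0 : 0 ≤ cM := by
    rw [hcMdef]
    have := mul_nonneg (Nat.cast_nonneg (α := ℝ) N) (mul_nonneg hc10 zero_le_one)
    have := mul_nonneg (Nat.cast_nonneg (α := ℝ) N) (mul_nonneg hc30 h20)
    linarith
  -- B entries: B x = r * M * P + P * M * r
  have hBm : ∀ a b, Measurable fun x =>
      (q (k + s - 1) x *
        ((q (k' - 1) x - q k' x) * mDiff (k' + s') f x * q (k' + s' - 1) x +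
          q (k' + s' - 1) x * mDiff (k' + s') f x * (q (k' - 1) x - q k' x))ᴴ *
        (q (k - 1) x - q k x) +
      (q (k - 1) x - q k x) *
        ((q (k' - 1) x - q k' x) * mDiff (k' + s') f x * q (k' + s' - 1) x +
          q (k' + s' - 1) x * mDiff (k' + s') f x * (q (k' - 1) x - q k' x))ᴴ *
        q (k + s - 1) x) a b :=
    entryMeas_add
      (entryMeas_mul (entryMeas_mul (hqmeas (k+s-1)) hMm) hPm)
      (entryMeas_mul (entryMeas_mul hPm hMm) (hqmeas (k+s-1)))
  have hc50 : (0:ℝ) ≤ (N:ℝ) * (1 * cM) :=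
    mul_nonneg (Nat.cast_nonneg _) (mul_nonneg zero_le_one hcM0)
  have hc70 : (0:ℝ) ≤ (N:ℝ) * ((1+1) * cM) :=
    mul_nonneg (Nat.cast_nonneg _) (mul_nonneg h20 hcM0)
  have hBb : ∀ (x : Fin n → ℝ) (a b : Fin N), ‖
      (q (k + s - 1) x *
        ((q (k' - 1) x - q k' x) * mDiff (k' + s') f x * q (k' + s' - 1) x +
          q (k' + s' - 1) x * mDiff (k' + s') f x * (q (k' - 1) x - q k' x))ᴴ *
        (q (k - 1) x - q k x) +
      (q (k - 1) x - q k x) *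
        ((q (k' - 1) x - q k' x) * mDiff (k' + s') f x * q (k' + s' - 1) x +
          q (k' + s' - 1) x * mDiff (k' + s') f x * (q (k' - 1) x - q k' x))ᴴ *
        q (k + s - 1) x) a b‖
      ≤ (N:ℝ) * ((N:ℝ) * (1 * cM) * (1+1)) + (N:ℝ) * ((N:ℝ) * ((1+1) * cM) * 1) :=
    entryBdd_add
      (entryBdd_mul hc50 (entryBdd_mul zero_le_one (fun x a b => hqe (k+s-1) x a b) hMe) hPe)
      (entryBdd_mul hc70 (entryBdd_mul h20 hPe hMe) (fun x a b => hqe (k+s-1) x a b))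
  set CB : ℝ := (N:ℝ) * ((N:ℝ) * (1 * cM) * (1+1)) + (N:ℝ) * ((N:ℝ) * ((1+1) * cM) * 1)
    with hCBdef
  have hCB0 : 0 ≤ CB := by
    rw [hCBdef]
    have := mul_nonneg (Nat.cast_nonneg (α := ℝ) N) (mul_nonneg hc50 h20)
    have := mul_nonneg (Nat.cast_nonneg (α := ℝ) N) (mul_nonneg hc70 zero_le_one)
    linarith
  -- constancy of B at scale k+s-1
  have hBc : ∀ x y : Fin n → ℝ, (∀ i, ⌊(2:ℝ)^(k+s-1) * x i⌋ = ⌊(2:ℝ)^(k+s-1) * y i⌋) →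
      (q (k + s - 1) x *
        ((q (k' - 1) x - q k' x) * mDiff (k' + s') f x * q (k' + s' - 1) x +
          q (k' + s' - 1) x * mDiff (k' + s') f x * (q (k' - 1) x - q k' x))ᴴ *
        (q (k - 1) x - q k x) +
      (q (k - 1) x - q k x) *
        ((q (k' - 1) x - q k' x) * mDiff (k' + s') f x * q (k' + s' - 1) x +
          q (k' + s' - 1) x * mDiff (k' + s') f x * (q (k' - 1) x - q k' x))ᴴ *
        q (k + s - 1) x)
      = (q (k + s - 1) y *
        ((q (k' - 1) y - q k' y) * mDiff (k' + s') f y * q (k' + s' - 1) y +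
          q (k' + s' - 1) y * mDiff (k' + s') f y * (q (k' - 1) y - q k' y))ᴴ *
        (q (k - 1) y - q k y) +
      (q (k - 1) y - q k y) *
        ((q (k' - 1) y - q k' y) * mDiff (k' + s') f y * q (k' + s' - 1) y +
          q (k' + s' - 1) y * mDiff (k' + s') f y * (q (k' - 1) y - q k' y))ᴴ *
        q (k + s - 1) y) := by
    intro x y hfl
    have hq' : ∀ m : ℤ, m ≤ k+s-1 → q m x = q m y := fun m hm =>
      hqadapt m x y (fun i => floor_coarsen hm (hfl i))
    have hd' : mDiff (k'+s') f x = mDiff (k'+s') f y := by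
      unfold mDiff
      rw [mDyadicAvg_congr (k'+s') f (fun i => floor_coarsen (by omega) (hfl i)),
        mDyadicAvg_congr (k'+s'-1) f (fun i => floor_coarsen (by omega) (hfl i))]
    rw [hq' (k+s-1) le_rfl, hq' (k-1) (by omega), hq' k (by omega), hq' (k'-1) (by omega),
      hq' k' (by omega), hq' (k'+s'-1) (by omega), hd']
  -- the per-entry integrals vanish
  have key : ∀ (a b : Fin N),
      (∫ x : Fin n → ℝ, mDiff (k+s) f x a b *
        (q (k + s - 1) x *
          ((q (k' - 1) x - q k' x) * mDiff (k' + s') f x * q (k' + s' - 1) x +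
            q (k' + s' - 1) x * mDiff (k' + s') f x * (q (k' - 1) x - q k' x))ᴴ *
          (q (k - 1) x - q k x) +
        (q (k - 1) x - q k x) *
          ((q (k' - 1) x - q k' x) * mDiff (k' + s') f x * q (k' + s' - 1) x +
            q (k' + s' - 1) x * mDiff (k' + s') f x * (q (k' - 1) x - q k' x))ᴴ *
          q (k + s - 1) x) b a) = 0
      ∧ Integrable (fun x : Fin n → ℝ => mDiff (k+s) f x a b *
        (q (k + s - 1) x *
          ((q (k' - 1) x - q k' x) * mDiff (k' + s') f x * q (k' + s' - 1) x +
            q (k' + s' - 1) x * mDiff (k' + s') f x * (q (k' - 1) x - q k' x))ᴴ *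
          (q (k - 1) x - q k x) +
        (q (k - 1) x - q k x) *
          ((q (k' - 1) x - q k' x) * mDiff (k' + s') f x * q (k' + s' - 1) x +
            q (k' + s' - 1) x * mDiff (k' + s') f x * (q (k' - 1) x - q k' x))ᴴ *
          q (k + s - 1) x) b a) := by
    intro a b
    set g : (Fin n → ℝ) → ℂ := fun x =>
      (q (k + s - 1) x *
        ((q (k' - 1) x - q k' x) * mDiff (k' + s') f x * q (k' + s' - 1) x +
          q (k' + s' - 1) x * mDiff (k' + s') f x * (q (k' - 1) x - q k' x))ᴴ *
        (q (k - 1) x - q k x) +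
      (q (k - 1) x - q k x) *
        ((q (k' - 1) x - q k' x) * mDiff (k' + s') f x * q (k' + s' - 1) x +
          q (k' + s' - 1) x * mDiff (k' + s') f x * (q (k' - 1) x - q k' x))ᴴ *
        q (k + s - 1) x) b a with hgdef
    have hgm : Measurable g := hBm b a
    have hgb : ∀ x, ‖g x‖ ≤ CB := fun x => hBb x b a
    have hgc : ∀ x y : Fin n → ℝ, (∀ i, ⌊(2:ℝ)^(k+s-1) * x i⌋ = ⌊(2:ℝ)^(k+s-1) * y i⌋) →
        g x = g y := fun x y hfl => by
      rw [hgdef]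
      simp only
      rw [hBc x y hfl]
    have hrw : (fun x : Fin n → ℝ => mDiff (k+s) f x a b * g x)
        = fun x => sAvg n (k+s) (fun y => f y a b) x * g x
            - sAvg n (k+s-1) (fun y => f y a b) x * g x := by
      funext x
      rw [show mDiff (k+s) f x a b
        = sAvg n (k+s) (fun y => f y a b) x - sAvg n (k+s-1) (fun y => f y a b) x from rfl,
        sub_mul]
    have hsavgint : ∀ m : ℤ, Integrable (fun x => sAvg n m (fun y => f y a b) x * g x) :=
      fun m =>
      integrable_of_bdd_supp ((sAvg_measurable _ _ _).mul hgm)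
        (C := Cf * CB)
        (fun x => by
          rw [norm_mul]
          exact mul_le_mul (sAvg_norm_le (hfmeas a b) (fun y => hfe y a b) x) (hgb x)
            (norm_nonneg _) hCf0)
        (R := R + (2:ℝ)^(-m))
        (fun x hx => by rw [sAvg_eq_zero (hfsupp' a b) hx, zero_mul])
    have hint1 : ∫ x, sAvg n (k+s) (fun y => f y a b) x * g x = ∫ x, f x a b * g x :=
      integral_sAvg_mul n (k+s) (k+s-1) (by omega) _ g (hfmeas a b)
        (fun y => hfe y a b) (hfsupp' a b) hgm hgb hgc
    have hint2 : ∫ x, sAvg n (k+s-1) (fun y => f y a b) x * g x = ∫ x, f x a b * g x :=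
      integral_sAvg_mul n (k+s-1) (k+s-1) le_rfl _ g (hfmeas a b)
        (fun y => hfe y a b) (hfsupp' a b) hgm hgb hgc
    constructor
    · show (∫ x, mDiff (k+s) f x a b * g x) = 0
      rw [hrw, integral_sub (hsavgint (k+s)) (hsavgint (k+s-1)), hint1, hint2, sub_self]
    · show Integrable (fun x => mDiff (k+s) f x a b * g x)
      rw [hrw]
      exact (hsavgint (k+s)).sub (hsavgint (k+s-1))
  -- assemble
  calc (∫ x : Fin n → ℝ, Matrix.trace
        (((q (k - 1) x - q k x) * mDiff (k + s) f x * q (k + s - 1) x +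
            q (k + s - 1) x * mDiff (k + s) f x * (q (k - 1) x - q k x)) *
         ((q (k' - 1) x - q k' x) * mDiff (k' + s') f x * q (k' + s' - 1) x +
            q (k' + s' - 1) x * mDiff (k' + s') f x * (q (k' - 1) x - q k' x))ᴴ))
      = ∫ x : Fin n → ℝ, ∑ ab : Fin N × Fin N, mDiff (k+s) f x ab.1 ab.2 *
          (q (k + s - 1) x *
            ((q (k' - 1) x - q k' x) * mDiff (k' + s') f x * q (k' + s' - 1) x +
              q (k' + s' - 1) x * mDiff (k' + s') f x * (q (k' - 1) x - q k' x))ᴴ *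
            (q (k - 1) x - q k x) +
          (q (k - 1) x - q k x) *
            ((q (k' - 1) x - q k' x) * mDiff (k' + s') f x * q (k' + s' - 1) x +
              q (k' + s' - 1) x * mDiff (k' + s') f x * (q (k' - 1) x - q k' x))ᴴ *
            q (k + s - 1) x) ab.2 ab.1 := by
        apply integral_congr_ae
        filter_upwards with x
        rw [add_mul, Matrix.trace_add, trace_sandwich, trace_sandwich, ← Matrix.trace_add,
          ← mul_add, trace_mul_eq_sum_prod]
  _ = ∑ ab : Fin N × Fin N, ∫ x : Fin n → ℝ, mDiff (k+s) f x ab.1 ab.2 *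
          (q (k + s - 1) x *
            ((q (k' - 1) x - q k' x) * mDiff (k' + s') f x * q (k' + s' - 1) x +
              q (k' + s' - 1) x * mDiff (k' + s') f x * (q (k' - 1) x - q k' x))ᴴ *
            (q (k - 1) x - q k x) +
          (q (k - 1) x - q k x) *
            ((q (k' - 1) x - q k' x) * mDiff (k' + s') f x * q (k' + s' - 1) x +
              q (k' + s' - 1) x * mDiff (k' + s') f x * (q (k' - 1) x - q k' x))ᴴ *
            q (k + s - 1) x) ab.2 ab.1 :=
        integral_finset_sum _ (fun ab _ => (key ab.1 ab.2).2)
  _ = 0 := Finset.sum_eq_zero fun ab _ => (key ab.1 ab.2).1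

/-- Orthogonality of the off-diagonal good terms (Paragraph 6.3.1): with `p_k = q_{k-1} - q_k`
the Cuculescu projections and `g_{k,s} = p_k df_{k+s} q_{k+s-1} + q_{k+s-1} df_{k+s} p_k`,
the family `(g_{k,s})_{k, s ≥ 1}` is pairwise orthogonal in `L₂(A)`:
`φ(g_{k,s} g_{k',s'}^*) = 0` unless `(k,s) = (k',s')`, where `φ = ∫ tr`. -/
theorem gks_pairwise_orthogonal (n N : ℕ) (lam : ℝ) (hlam : 0 < lam)
    (f : (Fin n → ℝ) → Matrix (Fin N) (Fin N) ℂ)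
    (hfmeas : ∀ i j, Measurable fun x => f x i j)
    (hfpos : ∀ x, Matrix.PosSemidef (f x))
    (hfbdd : ∃ C : ℝ, ∀ x, Matrix.PosSemidef (C • (1 : Matrix (Fin N) (Fin N) ℂ) - f x))
    (hfsupp : ∃ R : ℝ, ∀ x : Fin n → ℝ, R < ‖x‖ → f x = 0)
    (q : ℤ → (Fin n → ℝ) → Matrix (Fin N) (Fin N) ℂ)
    (hqmeas : ∀ k i j, Measurable fun x => q k x i j)
    (hqproj : ∀ k x, (q k x).IsHermitian ∧ q k x * q k x = q k x)
    (hqadapt : ∀ (k : ℤ) (x y : Fin n → ℝ),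
      (∀ i, ⌊(2 : ℝ) ^ k * x i⌋ = ⌊(2 : ℝ) ^ k * y i⌋) → q k x = q k y)
    (hqdec : ∀ (j k : ℤ), j ≤ k → ∀ x,
      q k x * q j x = q k x ∧ q j x * q k x = q k x) :
    ∀ (k k' s s' : ℤ), 1 ≤ s → 1 ≤ s' → (k, s) ≠ (k', s') →
      (∫ x : Fin n → ℝ, Matrix.trace
        (((q (k - 1) x - q k x) * mDiff (k + s) f x * q (k + s - 1) x +
            q (k + s - 1) x * mDiff (k + s) f x * (q (k - 1) x - q k x)) *
         ((q (k' - 1) x - q k' x) * mDiff (k' + s') f x * q (k' + s' - 1) x +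
            q (k' + s' - 1) x * mDiff (k' + s') f x * (q (k' - 1) x - q k' x))ᴴ))
        = 0 := by
  intro k k' s s' hs hs' hne
  by_cases hj : k + s = k' + s'
  · -- same martingale level: the integrand vanishes pointwise
    have hkk' : k ≠ k' := by
      intro hkeq
      apply hne
      have hseq : s = s' := by omega
      rw [hkeq, hseq]
    have hpt : ∀ x : Fin n → ℝ, Matrix.trace
        (((q (k - 1) x - q k x) * mDiff (k + s) f x * q (k + s - 1) x +
            q (k + s - 1) x * mDiff (k + s) f x * (q (k - 1) x - q k x)) *
         ((q (k' - 1) x - q k' x) * mDiff (k' + s') f x * q (k' + s' - 1) x +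
            q (k' + s' - 1) x * mDiff (k' + s') f x * (q (k' - 1) x - q k' x))ᴴ) = 0 := by
      intro x
      have hidx : k' + s' - 1 = k + s - 1 := by omega
      rw [hidx]
      exact trace_good_pair_zero _ _ _ _ _
        (by rw [Matrix.conjTranspose_sub, (hqproj (k'-1) x).1.eq, (hqproj k' x).1.eq])
        ((hqproj (k+s-1) x).1.eq)
        (p_mul_p_zero hqdec k' k (Ne.symm hkk') x)
        ((p_mul_q_zero hqdec k' (k+s-1) (by omega) x).2)
        ((p_mul_q_zero hqdec k (k+s-1) (by omega) x).1)
        (p_mul_p_zero hqdec k k' hkk' x)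
    exact (integral_congr_ae (Filter.Eventually.of_forall hpt)).trans (integral_zero _ _)
  · rcases Ne.lt_or_gt hj with hlt | hlt
    · -- k + s < k' + s' : use conjugation symmetry
      have h0 := gks_aux n N f hfmeas hfpos hfbdd hfsupp q hqmeas hqproj hqadapt
        k' k s' s hs' hs hlt
      have hconj : ∀ x : Fin n → ℝ, Matrix.trace
          (((q (k - 1) x - q k x) * mDiff (k + s) f x * q (k + s - 1) x +
            q (k + s - 1) x * mDiff (k + s) f x * (q (k - 1) x - q k x)) *
           ((q (k' - 1) x - q k' x) * mDiff (k' + s') f x * q (k' + s' - 1) x +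
            q (k' + s' - 1) x * mDiff (k' + s') f x * (q (k' - 1) x - q k' x))ᴴ)
          = (starRingEnd ℂ) (Matrix.trace
          (((q (k' - 1) x - q k' x) * mDiff (k' + s') f x * q (k' + s' - 1) x +
            q (k' + s' - 1) x * mDiff (k' + s') f x * (q (k' - 1) x - q k' x)) *
           ((q (k - 1) x - q k x) * mDiff (k + s) f x * q (k + s - 1) x +
            q (k + s - 1) x * mDiff (k + s) f x * (q (k - 1) x - q k x))ᴴ)) := by
        intro x
        have h1 : (((q (k' - 1) x - q k' x) * mDiff (k' + s') f x * q (k' + s' - 1) x +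
            q (k' + s' - 1) x * mDiff (k' + s') f x * (q (k' - 1) x - q k' x)) *
           ((q (k - 1) x - q k x) * mDiff (k + s) f x * q (k + s - 1) x +
            q (k + s - 1) x * mDiff (k + s) f x * (q (k - 1) x - q k x))ᴴ)ᴴ
            = ((q (k - 1) x - q k x) * mDiff (k + s) f x * q (k + s - 1) x +
            q (k + s - 1) x * mDiff (k + s) f x * (q (k - 1) x - q k x)) *
           ((q (k' - 1) x - q k' x) * mDiff (k' + s') f x * q (k' + s' - 1) x +
            q (k' + s' - 1) x * mDiff (k' + s') f x * (q (k' - 1) x - q k' x))ᴴ := by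
          rw [Matrix.conjTranspose_mul, Matrix.conjTranspose_conjTranspose]
        rw [← h1, Matrix.trace_conjTranspose, Complex.star_def]
      calc (∫ x : Fin n → ℝ, Matrix.trace
          (((q (k - 1) x - q k x) * mDiff (k + s) f x * q (k + s - 1) x +
            q (k + s - 1) x * mDiff (k + s) f x * (q (k - 1) x - q k x)) *
           ((q (k' - 1) x - q k' x) * mDiff (k' + s') f x * q (k' + s' - 1) x +
            q (k' + s' - 1) x * mDiff (k' + s') f x * (q (k' - 1) x - q k' x))ᴴ))
          = ∫ x : Fin n → ℝ, (starRingEnd ℂ) (Matrix.trace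
          (((q (k' - 1) x - q k' x) * mDiff (k' + s') f x * q (k' + s' - 1) x +
            q (k' + s' - 1) x * mDiff (k' + s') f x * (q (k' - 1) x - q k' x)) *
           ((q (k - 1) x - q k x) * mDiff (k + s) f x * q (k + s - 1) x +
            q (k + s - 1) x * mDiff (k + s) f x * (q (k - 1) x - q k x))ᴴ)) :=
            integral_congr_ae (Filter.Eventually.of_forall hconj)
      _ = (starRingEnd ℂ) (∫ x : Fin n → ℝ, Matrix.trace
          (((q (k' - 1) x - q k' x) * mDiff (k' + s') f x * q (k' + s' - 1) x +
            q (k' + s' - 1) x * mDiff (k' + s') f x * (q (k' - 1) x - q k' x)) *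
           ((q (k - 1) x - q k x) * mDiff (k + s) f x * q (k + s - 1) x +
            q (k + s - 1) x * mDiff (k + s) f x * (q (k - 1) x - q k x))ᴴ)) := integral_conj
      _ = 0 := by rw [h0, map_zero]
    · exact gks_aux n N f hfmeas hfpos hfbdd hfsupp q hqmeas hqproj hqadapt
        k k' s s' hs hs' hlt
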